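/- Given n disjoint finite vertex sets V_1,…,V_n with |V_i| ≥ 2 for all i, the number of octahedral systems on V_1,…,V_n, i.e. the number of edge sets E of colourful selections (one vertex from each V_i) satisfying the parity condition, is exactly 2^{Π_{i=1}^n |V_i| − Π_{i=1}^n (|V_i| − 1)}. -/

import Mathlib

/-- An octahedral system: an `n`-uniform `n`-partite hypergraph on the vertex sets `V i`
(edges pick one vertex from each `V i`) satisfying the parity condition. -/
def IsOctahedralSystem {α : Type*} [DecidableEq α] {n : ℕ}
    (V : Fin n → Finset α) (E : Finset (Fin n → α)) : Prop :=
  (∀ e ∈ E, ∀ i, e i ∈ V i) ∧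
  ∀ X : Fin n → Finset α, (∀ i, X i ⊆ V i) → (∀ i, (X i).card = 2) →
    Even ((E.filter fun e => ∀ i, e i ∈ X i).card)

/-- Every vertex belongs to at least one edge. -/
def NoIsolatedVertex {α : Type*} {n : ℕ}
    (V : Fin n → Finset α) (E : Finset (Fin n → α)) : Prop :=
  ∀ i : Fin n, ∀ v ∈ V i, ∃ e ∈ E, e i = v

set_option linter.unusedSectionVars false
set_option linter.unusedVariables false

namespace OctAux

open Finset

variable {α : Type*} [DecidableEq α] {n : ℕ}

def chi (F : Finset (Fin n → α)) (e : Fin n → α) : ZMod 2 :=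
  if e ∈ F then 1 else 0

def res (v e : Fin n → α) (S : Finset (Fin n)) : Fin n → α :=
  fun i => if i ∈ S then v i else e i

def Sne (n : ℕ) : Finset (Finset (Fin n)) := (Finset.univ : Finset (Fin n)).powerset.erase ∅

def extF (V : Fin n → Finset α) (v : Fin n → α) (F : Finset (Fin n → α)) :
    Finset (Fin n → α) :=
  (Fintype.piFinset V).filter (fun e => ∑ S ∈ Sne n, chi F (res v e S) = 1)

def DD (V : Fin n → Finset α) (v : Fin n → α) : Finset (Fin n → α) :=
  (Fintype.piFinset V).filter (fun e => ∃ i, e i = v i)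

lemma mem_extF {V : Fin n → Finset α} {v : Fin n → α} {F : Finset (Fin n → α)}
    {e : Fin n → α} :
    e ∈ extF V v F ↔ e ∈ Fintype.piFinset V ∧ ∑ S ∈ Sne n, chi F (res v e S) = 1 :=
  Finset.mem_filter

lemma empty_not_mem_Sne : (∅ : Finset (Fin n)) ∉ Sne n := Finset.notMem_erase _ _

lemma zmod_cases (x : ZMod 2) : x = 0 ∨ x = 1 := by
  have : ∀ y : ZMod 2, y = 0 ∨ y = 1 := by decide
  exact this x

lemma zmod_add_self (x : ZMod 2) : x + x = 0 := by
  have : ∀ y : ZMod 2, y + y = 0 := by decide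
  exact this x

lemma zmod_cancel {x y : ZMod 2} (h : x + y = 0) : y = x := by
  have : ∀ a b : ZMod 2, a + b = 0 → b = a := by decide
  exact this x y h

lemma chi_congr {E F : Finset (Fin n → α)} {e : Fin n → α} (h : chi E e = chi F e) :
    e ∈ E ↔ e ∈ F := by
  unfold chi at h
  split_ifs at h with h1 h2 h2 <;> simp_all

lemma res_empty (v e : Fin n → α) : res v e ∅ = e := by
  funext i; simp [res]

lemma res_mem_pi {V : Fin n → Finset α} {v : Fin n → α} (hv : ∀ i, v i ∈ V i)
    {e : Fin n → α} (he : e ∈ Fintype.piFinset V) (S : Finset (Fin n)) :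
    res v e S ∈ Fintype.piFinset V := by
  rw [Fintype.mem_piFinset] at he ⊢
  intro i; simp only [res]
  split
  · exact hv i
  · exact he i

lemma sum_powerset_toggle (j : Fin n) (g : Finset (Fin n) → ZMod 2)
    (h : ∀ S, j ∉ S → g (insert j S) = g S) :
    ∑ S ∈ (Finset.univ : Finset (Fin n)).powerset, g S = 0 := by
  refine Finset.sum_involution
    (fun S _ => if j ∈ S then S.erase j else insert j S) ?_ ?_ ?_ ?_
  · intro S _
    by_cases hj : j ∈ S
    · rw [if_pos hj]
      have h1 := h (S.erase j) (Finset.notMem_erase _ _)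
      rw [Finset.insert_erase hj] at h1
      rw [h1]; exact zmod_add_self _
    · rw [if_neg hj, h S hj]; exact zmod_add_self _
  · intro S _ _
    by_cases hj : j ∈ S
    · rw [if_pos hj]
      intro hc
      exact (Finset.erase_eq_self.1 hc) hj
    · rw [if_neg hj]
      intro hc
      exact hj (Finset.insert_eq_self.1 hc)
  · intro S _; exact Finset.mem_powerset.2 (Finset.subset_univ _)
  · intro S _
    by_cases hj : j ∈ S
    · rw [if_pos hj, if_neg (Finset.notMem_erase j S)]
      exact Finset.insert_erase hj
    · rw [if_neg hj, if_pos (Finset.mem_insert_self j S)]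
      exact Finset.erase_insert hj

lemma sum_piFinset_toggle (X : Fin n → Finset α) (j : Fin n) (hXj : (X j).card = 2)
    (g : (Fin n → α) → ZMod 2) (h : ∀ c x, g (Function.update c j x) = g c) :
    ∑ c ∈ Fintype.piFinset X, g c = 0 := by
  obtain ⟨a, b, hab, hXe⟩ := Finset.card_eq_two.1 hXj
  have hmem : ∀ c ∈ Fintype.piFinset X, c j = a ∨ c j = b := by
    intro c hc
    have := Fintype.mem_piFinset.1 hc j
    rw [hXe] at this
    simpa using this
  refine Finset.sum_involution
    (fun c _ => Function.update c j (if c j = a then b else a)) ?_ ?_ ?_ ?_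
  · intro c _; rw [h]; exact zmod_add_self _
  · intro c hc _
    intro hcontra
    have hj : Function.update c j (if c j = a then b else a) j = c j := by rw [hcontra]
    rw [Function.update_self] at hj
    rcases hmem c hc with h1 | h1
    · rw [h1, if_pos rfl] at hj; exact hab hj.symm
    · have hne : c j ≠ a := fun hc' => hab (hc' ▸ h1.symm).symm
      rw [if_neg hne] at hj; exact hne hj.symm
  · intro c hc
    rw [Fintype.mem_piFinset] at hc ⊢
    intro i
    by_cases hij : i = j
    · subst hij
      rw [Function.update_self, hXe]
      split <;> simp
    · rw [Function.update_of_ne hij]; exact hc i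
  · intro c hc
    rw [Function.update_self, Function.update_idem]
    rcases hmem c hc with h1 | h1
    · rw [h1, if_pos rfl, if_neg (Ne.symm hab), ← h1, Function.update_eq_self]
    · have hne : c j ≠ a := fun hc' => hab (hc' ▸ h1.symm).symm
      rw [if_neg hne, if_pos rfl, ← h1, Function.update_eq_self]

lemma sum_Sne_of_base (F : Finset (Fin n → α)) (v : Fin n → α)
    {e : Fin n → α} {i0 : Fin n} (hi0 : e i0 = v i0) :
    ∑ S ∈ Sne n, chi F (res v e S) = chi F e := by
  have h0 : ∑ S ∈ (Finset.univ : Finset (Fin n)).powerset, chi F (res v e S) = 0 := by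
    refine sum_powerset_toggle i0 _ fun S hS => ?_
    congr 1
    funext i
    simp only [res]
    by_cases hiS : i ∈ S
    · rw [if_pos hiS, if_pos (Finset.mem_insert_of_mem hiS)]
    · by_cases hii : i = i0
      · subst hii
        rw [if_pos (Finset.mem_insert_self _ _), if_neg hiS, hi0]
      · rw [if_neg (by simp [hii, hiS]), if_neg hiS]
  have hins : insert (∅ : Finset (Fin n)) (Sne n) = (Finset.univ : Finset (Fin n)).powerset :=
    Finset.insert_erase (Finset.mem_powerset.2 (Finset.empty_subset _))
  rw [← hins, Finset.sum_insert empty_not_mem_Sne, res_empty] at h0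
  exact zmod_cancel h0

lemma chi_extF (V : Fin n → Finset α) (v : Fin n → α) (F : Finset (Fin n → α))
    {e : Fin n → α} (he : e ∈ Fintype.piFinset V) :
    chi (extF V v F) e = ∑ S ∈ Sne n, chi F (res v e S) := by
  rcases zmod_cases (∑ S ∈ Sne n, chi F (res v e S)) with h | h
  · rw [h]
    unfold chi
    rw [if_neg]
    intro hc
    have := (mem_extF.1 hc).2
    rw [h] at this
    exact one_ne_zero this.symm
  · rw [h]
    unfold chi
    rw [if_pos (mem_extF.2 ⟨he, h⟩)]

lemma mem_extF_iff (V : Fin n → Finset α) (v : Fin n → α) (F : Finset (Fin n → α))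
    {e : Fin n → α} (he : e ∈ Fintype.piFinset V) {i0 : Fin n} (hi0 : e i0 = v i0) :
    e ∈ extF V v F ↔ e ∈ F :=
  chi_congr (by rw [chi_extF V v F he, sum_Sne_of_base F v hi0])

lemma parity_sum (E : Finset (Fin n → α)) (X : Fin n → Finset α) :
    (((E.filter fun e => ∀ i, e i ∈ X i).card : ℕ) : ZMod 2)
      = ∑ c ∈ Fintype.piFinset X, chi E c := by
  have h1 : E.filter (fun e => ∀ i, e i ∈ X i) = (Fintype.piFinset X).filter (· ∈ E) := by
    ext e
    simp only [Finset.mem_filter, Fintype.mem_piFinset]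
    tauto
  rw [h1, Finset.card_filter]
  push_cast
  unfold chi
  rfl

lemma even_iff_zmod {m : ℕ} : Even m ↔ ((m : ℕ) : ZMod 2) = 0 := by
  rw [even_iff_two_dvd, ← ZMod.natCast_eq_zero_iff]

lemma extF_octa (V : Fin n → Finset α) (v : Fin n → α) (hv : ∀ i, v i ∈ V i)
    (F : Finset (Fin n → α)) : IsOctahedralSystem V (extF V v F) := by
  constructor
  · intro e he i
    exact Fintype.mem_piFinset.1 (mem_extF.1 he).1 i
  · intro X hX hX2
    rw [even_iff_zmod, parity_sum]
    have hrw : ∀ c ∈ Fintype.piFinset X, chi (extF V v F) c = ∑ S ∈ Sne n, chi F (res v c S) := by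
      intro c hc
      refine chi_extF V v F ?_
      rw [Fintype.mem_piFinset] at hc ⊢
      exact fun i => hX i (hc i)
    rw [Finset.sum_congr rfl hrw, Finset.sum_comm]
    refine Finset.sum_eq_zero fun S hS => ?_
    obtain ⟨j, hj⟩ : S.Nonempty :=
      Finset.nonempty_iff_ne_empty.2 (Finset.ne_of_mem_erase hS)
    refine sum_piFinset_toggle X j (hX2 j) _ fun c x => ?_
    congr 1
    funext i
    simp only [res]
    by_cases hiS : i ∈ S
    · rw [if_pos hiS, if_pos hiS]
    · have hij : i ≠ j := fun hc => hiS (hc ▸ hj)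
      rw [if_neg hiS, if_neg hiS, Function.update_of_ne hij]

lemma chi_octa_eq_sum (V : Fin n → Finset α) (v : Fin n → α) (hv : ∀ i, v i ∈ V i)
    {E : Finset (Fin n → α)} (hE : IsOctahedralSystem V E)
    {e : Fin n → α} (he : e ∈ Fintype.piFinset V) (hne : ∀ i, e i ≠ v i) :
    chi E e = ∑ S ∈ Sne n, chi E (res v e S) := by
  set X : Fin n → Finset α := fun i => {v i, e i} with hXdef
  have hXsub : ∀ i, X i ⊆ V i := by
    intro i x hx
    rw [hXdef] at hx
    simp only [Finset.mem_insert, Finset.mem_singleton] at hx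
    rcases hx with h | h
    · exact h ▸ hv i
    · exact h ▸ Fintype.mem_piFinset.1 he i
  have hX2 : ∀ i, (X i).card = 2 := fun i => Finset.card_pair (Ne.symm (hne i))
  have hpar := hE.2 X hXsub hX2
  rw [even_iff_zmod, parity_sum] at hpar
  have hre : ∑ c ∈ Fintype.piFinset X, chi E c
      = ∑ S ∈ (Finset.univ : Finset (Fin n)).powerset, chi E (res v e S) := by
    refine (Finset.sum_nbij' (i := fun S => res v e S)
      (j := fun c => Finset.univ.filter (fun i => c i = v i)) ?_ ?_ ?_ ?_ ?_).symm
    · intro S _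
      rw [Fintype.mem_piFinset]
      intro i
      simp only [res]
      split <;> simp [hXdef]
    · intro c _
      exact Finset.mem_powerset.2 (Finset.subset_univ _)
    · intro S _
      ext i
      simp only [Finset.mem_filter, Finset.mem_univ, true_and]
      simp only [res]
      constructor
      · intro h
        split at h
        · assumption
        · exact absurd h (hne i)
      · intro h
        rw [if_pos h]
    · intro c hc
      funext i
      simp only [res, Finset.mem_filter, Finset.mem_univ, true_and]
      have hci := Fintype.mem_piFinset.1 hc i
      rw [hXdef] at hci
      simp only [Finset.mem_insert, Finset.mem_singleton] at hci
      by_cases h : c i = v i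
      · rw [if_pos h, h]
      · rw [if_neg h]
        rcases hci with h1 | h1
        · exact absurd h1 h
        · exact h1.symm
    · intro S _; rfl
  rw [hre] at hpar
  have hins : insert (∅ : Finset (Fin n)) (Sne n) = (Finset.univ : Finset (Fin n)).powerset :=
    Finset.insert_erase (Finset.mem_powerset.2 (Finset.empty_subset _))
  rw [← hins, Finset.sum_insert empty_not_mem_Sne, res_empty] at hpar
  exact (zmod_cancel hpar).symm

lemma ext_inter_eq (V : Fin n → Finset α) (v : Fin n → α) (hv : ∀ i, v i ∈ V i)
    {E : Finset (Fin n → α)} (hE : IsOctahedralSystem V E) :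
    extF V v (E ∩ DD V v) = E := by
  ext e
  by_cases heG : e ∈ Fintype.piFinset V
  · by_cases hD : ∃ i, e i = v i
    · obtain ⟨i0, hi0⟩ := hD
      rw [mem_extF_iff V v _ heG hi0, Finset.mem_inter]
      constructor
      · exact fun h => h.1
      · intro h
        exact ⟨h, Finset.mem_filter.2 ⟨heG, ⟨i0, hi0⟩⟩⟩
    · push_neg at hD
      refine chi_congr ?_
      rw [chi_extF V v _ heG]
      have hstep : ∀ S ∈ Sne n, chi (E ∩ DD V v) (res v e S) = chi E (res v e S) := by
        intro S hS
        obtain ⟨j, hj⟩ : S.Nonempty :=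
          Finset.nonempty_iff_ne_empty.2 (Finset.ne_of_mem_erase hS)
        have hresD : res v e S ∈ DD V v := by
          refine Finset.mem_filter.2 ⟨res_mem_pi hv heG S, ⟨j, ?_⟩⟩
          simp only [res]
          rw [if_pos hj]
        unfold chi
        by_cases hmem : res v e S ∈ E
        · rw [if_pos (Finset.mem_inter.2 ⟨hmem, hresD⟩), if_pos hmem]
        · rw [if_neg (fun hc => hmem (Finset.mem_inter.1 hc).1), if_neg hmem]
      rw [Finset.sum_congr rfl hstep]
      exact (chi_octa_eq_sum V v hv hE heG hD).symm
  · constructor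
    · intro h
      exact absurd (mem_extF.1 h).1 heG
    · intro h
      exact absurd (Fintype.mem_piFinset.2 (hE.1 e h)) heG

lemma inter_ext_eq (V : Fin n → Finset α) (v : Fin n → α)
    {F : Finset (Fin n → α)} (hF : F ⊆ DD V v) :
    extF V v F ∩ DD V v = F := by
  ext e
  rw [Finset.mem_inter]
  constructor
  · rintro ⟨h1, h2⟩
    obtain ⟨heG, i0, hi0⟩ := Finset.mem_filter.1 h2
    exact (mem_extF_iff V v F heG hi0).1 h1
  · intro h
    have h2 := hF h
    obtain ⟨heG, i0, hi0⟩ := Finset.mem_filter.1 h2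
    exact ⟨(mem_extF_iff V v F heG hi0).2 h, h2⟩

end OctAux

/-- The number of octahedral systems on vertex sets `V_1, …, V_n` is
`2^(Π|V_i| − Π(|V_i|−1))`. -/
theorem octahedral_count {α : Type*} [DecidableEq α] {n : ℕ}
    (V : Fin n → Finset α)
    (hdisj : ∀ i j : Fin n, i ≠ j → Disjoint (V i) (V j))
    (hcard : ∀ i, 2 ≤ (V i).card) :
    Nat.card {E : Finset (Fin n → α) // IsOctahedralSystem V E} =
      2 ^ (∏ i : Fin n, (V i).card - ∏ i : Fin n, ((V i).card - 1)) := by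
  classical
  have hne : ∀ i, (V i).Nonempty := fun i =>
    Finset.card_pos.1 (lt_of_lt_of_le two_pos (hcard i))
  set v : Fin n → α := fun i => (hne i).choose with hvdef
  have hvm : ∀ i, v i ∈ V i := fun i => (hne i).choose_spec
  have hequiv : {E : Finset (Fin n → α) // IsOctahedralSystem V E} ≃
      {F : Finset (Fin n → α) // F ∈ (OctAux.DD V v).powerset} :=
    { toFun := fun E => ⟨E.1 ∩ OctAux.DD V v,
        Finset.mem_powerset.2 Finset.inter_subset_right⟩
      invFun := fun F => ⟨OctAux.extF V v F.1, OctAux.extF_octa V v hvm F.1⟩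
      left_inv := fun E => Subtype.ext (OctAux.ext_inter_eq V v hvm E.2)
      right_inv := fun F => Subtype.ext
        (OctAux.inter_ext_eq V v (Finset.mem_powerset.1 F.2)) }
  rw [Nat.card_congr hequiv, Nat.card_eq_fintype_card, Fintype.card_coe,
    Finset.card_powerset]
  congr 1
  have hsplit := Finset.card_filter_add_card_filter_not
    (s := Fintype.piFinset V) (p := fun e => ∃ i, e i = v i)
  have hcompl : (Fintype.piFinset V).filter (fun e => ¬ ∃ i, e i = v i)
      = Fintype.piFinset (fun i => (V i).erase (v i)) := by
    ext e
    simp only [Finset.mem_filter, Fintype.mem_piFinset, Finset.mem_erase, not_exists]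
    constructor
    · rintro ⟨h1, h2⟩ i; exact ⟨h2 i, h1 i⟩
    · intro h; exact ⟨fun i => (h i).2, fun i => (h i).1⟩
  have hcc : ((Fintype.piFinset V).filter (fun e => ¬ ∃ i, e i = v i)).card
      = ∏ i : Fin n, ((V i).card - 1) := by
    rw [hcompl, Fintype.card_piFinset]
    exact Finset.prod_congr rfl fun i _ => Finset.card_erase_of_mem (hvm i)
  have hG : (Fintype.piFinset V).card = ∏ i : Fin n, (V i).card :=
    Fintype.card_piFinset V
  have hDc : (OctAux.DD V v).card
      = ((Fintype.piFinset V).filter (fun e => ∃ i, e i = v i)).card := rfl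
  rw [hDc, ← hG, ← hcc, ← hsplit]
  exact (Nat.add_sub_cancel _ _).symm
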